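/- arXiv:1506.04969 — 2 statements merged into one kernel-verified Lean document; each statement's English description precedes it below -/
import Mathlib

section
/- Let φ₀(t) = log(1/t) for t ∈ (0,1). Then [e^{εφ₀}]_{A∞((0,1))} = e^{−ε}/(1−ε) for every 0 ≤ ε < 1, and [e^{−εφ₀}]_{A∞((0,1))} = e^{ε}/(1+ε) for every 0 ≤ ε < ∞. Consequently ε_{φ₀} = 1 and ε_{−φ₀} = ∞, where ε_φ = sup{ε > 0 : e^{εφ} ∈ A∞((0,1))}. -/
open MeasureTheory Real Set Filter

/-- The average of `φ` over the interval `(c,d)`. -/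
noncomputable def intervalAvg (φ : ℝ → ℝ) (c d : ℝ) : ℝ :=
  (∫ t in c..d, φ t) / (d - c)

/-- The `p`-oscillation of `φ` over `(c,d)`. -/
noncomputable def oscP (p : ℝ) (φ : ℝ → ℝ) (c d : ℝ) : ℝ :=
  (intervalAvg (fun t => |φ t - intervalAvg φ c d| ^ p) c d) ^ (1 / p)

/-- The `BMO^p` norm of `φ` on the interval `(a,b)`. -/
noncomputable def bmoNorm (p a b : ℝ) (φ : ℝ → ℝ) : ℝ :=
  sSup {r : ℝ | ∃ c d : ℝ, a ≤ c ∧ c < d ∧ d ≤ b ∧ r = oscP p φ c d}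

/-- The `A∞` characteristic of the weight `w` on the interval `(a,b)`:
`sup_J (w_J)·e^{−(log w)_J}` over subintervals `J` of `(a,b)`. -/
noncomputable def aInftyChar (a b : ℝ) (w : ℝ → ℝ) : ℝ :=
  sSup {r : ℝ | ∃ c d : ℝ, a ≤ c ∧ c < d ∧ d ≤ b ∧
    r = intervalAvg w c d *
      Real.exp (-(intervalAvg (fun t => Real.log (w t)) c d))}

/-- `w ∈ A∞((a,b))`: `w` positive a.e., `w` and `log w` locally integrable, and
the `A∞` characteristic finite. -/
def MemAInfty (a b : ℝ) (w : ℝ → ℝ) : Prop :=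
  (∀ᵐ t ∂(volume.restrict (Set.Ioo a b)), 0 < w t) ∧
  (∀ c d : ℝ, a ≤ c → c < d → d ≤ b →
    IntervalIntegrable w volume c d ∧
    IntervalIntegrable (fun t => Real.log (w t)) volume c d) ∧
  BddAbove {r : ℝ | ∃ c d : ℝ, a ≤ c ∧ c < d ∧ d ≤ b ∧
    r = intervalAvg w c d *
      Real.exp (-(intervalAvg (fun t => Real.log (w t)) c d))}

open scoped ENNReal

/-- `ε_φ = sup{ε > 0 : e^{εφ} ∈ A∞((a,b))}`, as an extended real. -/
noncomputable def epsPhi (a b : ℝ) (φ : ℝ → ℝ) : ℝ≥0∞ :=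
  ⨆ (ε : ℝ) (_ : 0 < ε ∧ MemAInfty a b fun t => Real.exp (ε * φ t)),
    ENNReal.ofReal ε

section Aux
open intervalIntegral

lemma logInt {c d : ℝ} (hc : 0 ≤ c) (hcd : c < d) (hd : d ≤ 1) :
    IntervalIntegrable Real.log volume c d := by
  have hbig : IntegrableOn (fun x : ℝ => 2 * x ^ (-(1/2) : ℝ)) (Ioo (0:ℝ) 2) volume :=
    ((integrableOn_Ioo_rpow_iff (by norm_num)).2 (by norm_num)).const_mul 2
  have hlog : IntegrableOn Real.log (Ioc (0:ℝ) 1) volume := by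
    refine Integrable.mono (hbig.mono_set (by intro x hx; exact ⟨hx.1, by linarith [hx.2]⟩))
      (Real.measurable_log.aestronglyMeasurable) ?_
    filter_upwards [ae_restrict_mem measurableSet_Ioc] with x hx
    have hx0 : 0 < x := hx.1
    have hx1 : x ≤ 1 := hx.2
    have hlogle : -Real.log x ≤ 2 * x ^ (-(1/2) : ℝ) := by
      have h1 : Real.log (x ^ (-(1/2) : ℝ)) = -(1/2) * Real.log x := Real.log_rpow hx0 _
      have h2 : Real.log (x ^ (-(1/2) : ℝ)) ≤ x ^ (-(1/2) : ℝ) - 1 :=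
        Real.log_le_sub_one_of_pos (Real.rpow_pos_of_pos hx0 _)
      nlinarith [Real.rpow_pos_of_pos hx0 (-(1/2) : ℝ)]
    have hlogn : Real.log x ≤ 0 := Real.log_nonpos hx0.le hx1
    rw [Real.norm_eq_abs, Real.norm_eq_abs, abs_of_nonpos hlogn,
      abs_of_nonneg (by positivity : (0:ℝ) ≤ 2 * x ^ (-(1/2) : ℝ))]
    exact hlogle
  rw [intervalIntegrable_iff_integrableOn_Ioc_of_le hcd.le]
  exact hlog.mono_set (fun x hx => ⟨lt_of_le_of_lt hc hx.1, hx.2.trans hd⟩)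

lemma integral_log'' {c d : ℝ} (hc : 0 ≤ c) (hcd : c < d) (hd : d ≤ 1) :
    ∫ t in c..d, Real.log t = d * Real.log d - d - (c * Real.log c - c) := by
  have := intervalIntegral.integral_eq_sub_of_hasDerivAt_of_le hcd.le
    (f := fun x => x * Real.log x - x) (f' := Real.log)
    (Continuous.continuousOn (Real.continuous_mul_log.sub continuous_id)) ?_
    (logInt hc hcd hd)
  · simpa using this
  · intro x hx
    have hx0 : x ≠ 0 := ne_of_gt (lt_of_le_of_lt hc hx.1)
    have h1 := Real.hasDerivAt_mul_log hx0
    exact (h1.sub (hasDerivAt_id x)).congr_deriv (by ring)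

lemma key_ineq {α s : ℝ} (hα : -1 < α) (h0 : 0 ≤ s) (h1 : s < 1) :
    1 - s ^ (α + 1) ≤ (1 - s) * Real.exp (α * (-(s * Real.log s)) / (1 - s)) := by
  have h1s : 0 < 1 - s := by linarith
  rcases eq_or_lt_of_le h0 with rfl | hs
  · simp [Real.zero_rpow (by linarith : α + 1 ≠ 0)]
  · have hrw : s ^ (α + 1) = Real.exp (α * Real.log s) * s := by
      rw [Real.rpow_def_of_pos hs]
      rw [show Real.log s * (α + 1) = α * Real.log s + Real.log s by ring,
        Real.exp_add, Real.exp_log hs]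
    have e1 : α * Real.log s + 1 ≤ Real.exp (α * Real.log s) := Real.add_one_le_exp _
    have step1 : 1 - s ^ (α + 1) ≤ 1 - s - α * (s * Real.log s) := by
      rw [hrw]; nlinarith
    have e2 : α * (-(s * Real.log s)) / (1 - s) + 1 ≤
        Real.exp (α * (-(s * Real.log s)) / (1 - s)) := Real.add_one_le_exp _
    have step2 : 1 - s - α * (s * Real.log s) ≤
        (1 - s) * Real.exp (α * (-(s * Real.log s)) / (1 - s)) := by
      have h3 := mul_le_mul_of_nonneg_left e2 h1s.le
      have hdiv : (1 - s) * (α * (-(s * Real.log s)) / (1 - s) + 1) =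
          1 - s - α * (s * Real.log s) := by field_simp; ring
      linarith [hdiv ▸ h3]
    linarith

lemma keyCD {α c d : ℝ} (hα : -1 < α) (hc : 0 ≤ c) (hcd : c < d) :
    d ^ (α + 1) - c ^ (α + 1) ≤
      (d - c) * Real.exp (α * (d * Real.log d - c * Real.log c) / (d - c)) := by
  have hd0 : 0 < d := lt_of_le_of_lt hc hcd
  set s : ℝ := c / d with hs_def
  have hs0 : 0 ≤ s := div_nonneg hc hd0.le
  have hs1 : s < 1 := (div_lt_one hd0).2 hcd
  have hcs : c = s * d := (div_mul_cancel₀ c (ne_of_gt hd0)).symm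
  have h1s : 0 < 1 - s := by linarith
  have hdβ : d ^ (α + 1) = Real.exp (α * Real.log d) * d := by
    rw [Real.rpow_def_of_pos hd0,
      show Real.log d * (α + 1) = α * Real.log d + Real.log d by ring,
      Real.exp_add, Real.exp_log hd0]
  have hcβ : c ^ (α + 1) = s ^ (α + 1) * d ^ (α + 1) := by
    rw [hcs, Real.mul_rpow hs0 hd0.le]
  have hclogc : c * Real.log c = s * d * Real.log s + s * d * Real.log d := by
    rcases eq_or_lt_of_le hs0 with h | h
    · rw [hcs, ← h]; simp
    · rw [hcs, Real.log_mul (ne_of_gt h) (ne_of_gt hd0)]; ring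
  have hdc : d - c = d * (1 - s) := by rw [hcs]; ring
  have hexp : α * (d * Real.log d - c * Real.log c) / (d - c) =
      α * Real.log d + α * (-(s * Real.log s)) / (1 - s) := by
    rw [hclogc, hdc]
    field_simp
    ring
  have key := key_ineq hα hs0 hs1
  calc d ^ (α + 1) - c ^ (α + 1)
      = Real.exp (α * Real.log d) * d * (1 - s ^ (α + 1)) := by rw [hcβ, hdβ]; ring
    _ ≤ Real.exp (α * Real.log d) * d *
        ((1 - s) * Real.exp (α * (-(s * Real.log s)) / (1 - s))) := by
        apply mul_le_mul_of_nonneg_left key; positivity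
    _ = (d - c) * Real.exp (α * (d * Real.log d - c * Real.log c) / (d - c)) := by
        rw [hexp, Real.exp_add, hdc]; ring

lemma wInt {α c d : ℝ} (hα : -1 < α) (hc : 0 ≤ c) (hcd : c < d) :
    IntervalIntegrable (fun t => Real.exp (α * Real.log t)) volume c d := by
  have h := intervalIntegrable_rpow' (a := c) (b := d) hα
  rw [intervalIntegrable_iff_integrableOn_Ioo_of_le hcd.le] at h ⊢
  refine h.congr_fun (fun x hx => ?_) measurableSet_Ioo
  have hx0 : 0 < x := lt_of_le_of_lt hc hx.1
  beta_reduce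
  rw [Real.rpow_def_of_pos hx0, mul_comm]

lemma avg_w {α c d : ℝ} (hα : -1 < α) (hc : 0 ≤ c) (hcd : c < d) :
    intervalAvg (fun t => Real.exp (α * Real.log t)) c d =
      (d ^ (α + 1) - c ^ (α + 1)) / ((α + 1) * (d - c)) := by
  unfold intervalAvg
  have hcongr : ∀ᵐ x ∂(volume : Measure ℝ), x ∈ Set.uIoc c d →
      Real.exp (α * Real.log x) = x ^ α := by
    refine Eventually.of_forall fun x hx => ?_
    rw [Set.uIoc_of_le hcd.le] at hx
    have hx0 : 0 < x := lt_of_le_of_lt hc hx.1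
    rw [Real.rpow_def_of_pos hx0, mul_comm]
  rw [intervalIntegral.integral_congr_ae hcongr, integral_rpow (Or.inl hα), div_div]

lemma avg_logw {α c d : ℝ} (hc : 0 ≤ c) (hcd : c < d) (hd : d ≤ 1) :
    intervalAvg (fun t => Real.log (Real.exp (α * Real.log t))) c d =
      α * ((d * Real.log d - d - (c * Real.log c - c)) / (d - c)) := by
  unfold intervalAvg
  simp only [Real.log_exp]
  rw [intervalIntegral.integral_const_mul, integral_log'' hc hcd hd, mul_div_assoc]

lemma ratio_le {α c d : ℝ} (hα : -1 < α) (hc : 0 ≤ c) (hcd : c < d) (hd : d ≤ 1) :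
    intervalAvg (fun t => Real.exp (α * Real.log t)) c d *
      Real.exp (-(intervalAvg (fun t => Real.log (Real.exp (α * Real.log t))) c d)) ≤
      Real.exp α / (α + 1) := by
  rw [avg_w hα hc hcd, avg_logw hc hcd hd]
  have hβ : (0:ℝ) < α + 1 := by linarith
  have hD : (0:ℝ) < d - c := by linarith
  have hexp : -(α * ((d * Real.log d - d - (c * Real.log c - c)) / (d - c))) =
      α + -(α * (d * Real.log d - c * Real.log c) / (d - c)) := by
    field_simp
    ring
  rw [hexp, Real.exp_add]
  have h2 : (d ^ (α+1) - c ^ (α+1)) *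
      Real.exp (-(α * (d * Real.log d - c * Real.log c) / (d - c))) ≤ d - c := by
    have h3 := mul_le_mul_of_nonneg_right (keyCD hα hc hcd)
      (Real.exp_pos (-(α * (d * Real.log d - c * Real.log c) / (d - c)))).le
    have h4 : α * (d * Real.log d - c * Real.log c) / (d - c) +
        -(α * (d * Real.log d - c * Real.log c) / (d - c)) = 0 := by ring
    rwa [mul_assoc, ← Real.exp_add, h4, Real.exp_zero, mul_one] at h3
  calc (d ^ (α+1) - c ^ (α+1)) / ((α + 1) * (d - c)) *
        (Real.exp α * Real.exp (-(α * (d * Real.log d - c * Real.log c) / (d - c))))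
      = ((d ^ (α+1) - c ^ (α+1)) *
          Real.exp (-(α * (d * Real.log d - c * Real.log c) / (d - c)))) * Real.exp α /
          ((α + 1) * (d - c)) := by ring
    _ ≤ (d - c) * Real.exp α / ((α + 1) * (d - c)) := by gcongr
    _ = Real.exp α / (α + 1) := by
        field_simp

lemma ratio_01 {α : ℝ} (hα : -1 < α) :
    intervalAvg (fun t => Real.exp (α * Real.log t)) 0 1 *
      Real.exp (-(intervalAvg (fun t => Real.log (Real.exp (α * Real.log t))) 0 1)) =
      Real.exp α / (α + 1) := by
  rw [avg_w hα le_rfl one_pos, avg_logw le_rfl one_pos le_rfl]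
  rw [Real.one_rpow, Real.zero_rpow (by linarith : α + 1 ≠ 0), Real.log_one, Real.log_zero]
  norm_num
  rw [div_eq_inv_mul]

lemma master {α : ℝ} (hα : -1 < α) :
    MemAInfty 0 1 (fun t => Real.exp (α * Real.log t)) ∧
    aInftyChar 0 1 (fun t => Real.exp (α * Real.log t)) = Real.exp α / (α + 1) := by
  constructor
  · refine ⟨ae_of_all _ fun t => Real.exp_pos _,
      fun c d hc hcd hd => ⟨wInt hα hc hcd, ?_⟩,
      ⟨Real.exp α / (α + 1), ?_⟩⟩
    · show IntervalIntegrable (fun t => Real.log (Real.exp (α * Real.log t))) volume c d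
      have heq : (fun t => Real.log (Real.exp (α * Real.log t))) =
          fun t => α * Real.log t := by
        funext t; rw [Real.log_exp]
      rw [heq]
      exact (logInt hc hcd hd).const_mul α
    · rintro r ⟨c, d, hc, hcd, hd, rfl⟩
      exact ratio_le hα hc hcd hd
  · apply IsGreatest.csSup_eq
    constructor
    · exact ⟨0, 1, le_rfl, one_pos, le_rfl, (ratio_01 hα).symm⟩
    · rintro r ⟨c, d, hc, hcd, hd, rfl⟩
      exact ratio_le hα hc hcd hd

lemma fun_eq1 (ε : ℝ) :
    (fun t => Real.exp (ε * Real.log (1 / t))) = fun t => Real.exp (-ε * Real.log t) := by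
  funext t; rw [one_div, Real.log_inv, mul_neg, neg_mul]

lemma fun_eq2 (ε : ℝ) :
    (fun t => Real.exp (-(ε * Real.log (1 / t)))) = fun t => Real.exp (ε * Real.log t) := by
  funext t; rw [one_div, Real.log_inv, mul_neg, neg_neg]

lemma part1 (ε : ℝ) (h0 : 0 ≤ ε) (h1 : ε < 1) :
    MemAInfty 0 1 (fun t => Real.exp (ε * Real.log (1 / t))) ∧
    aInftyChar 0 1 (fun t => Real.exp (ε * Real.log (1 / t))) =
      Real.exp (-ε) / (1 - ε) := by
  have hα : (-1:ℝ) < -ε := by linarith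
  rw [fun_eq1]
  refine ⟨(master hα).1, ?_⟩
  rw [(master hα).2, show -ε + 1 = 1 - ε by ring]

lemma part2 (ε : ℝ) (h0 : 0 ≤ ε) :
    MemAInfty 0 1 (fun t => Real.exp (-(ε * Real.log (1 / t)))) ∧
    aInftyChar 0 1 (fun t => Real.exp (-(ε * Real.log (1 / t)))) =
      Real.exp ε / (1 + ε) := by
  have hα : (-1:ℝ) < ε := by linarith
  rw [fun_eq2]
  refine ⟨(master hα).1, ?_⟩
  rw [(master hα).2, add_comm ε 1]

lemma eps_lt_one {ε : ℝ} (h1 : 0 < ε)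
    (hmem : MemAInfty 0 1 (fun t => Real.exp (ε * Real.log (1 / t)))) : ε < 1 := by
  have hint := (hmem.2.1 0 1 le_rfl one_pos le_rfl).1
  rw [fun_eq1, intervalIntegrable_iff_integrableOn_Ioo_of_le (by norm_num : (0:ℝ) ≤ 1)]
    at hint
  have hrp : IntegrableOn (fun x : ℝ => x ^ (-ε)) (Ioo (0:ℝ) 1) volume := by
    refine hint.congr_fun (fun x hx => ?_) measurableSet_Ioo
    rw [Real.rpow_def_of_pos hx.1, mul_comm]
  have := (integrableOn_Ioo_rpow_iff one_pos).1 hrp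
  linarith

end Aux

/-- For `φ₀(t) = log(1/t)` on `(0,1)`:
`[e^{εφ₀}]_{A∞((0,1))} = e^{−ε}/(1−ε)` for `0 ≤ ε < 1`,
`[e^{−εφ₀}]_{A∞((0,1))} = e^{ε}/(1+ε)` for `0 ≤ ε < ∞`; consequently
`ε_{φ₀} = 1` and `ε_{−φ₀} = ∞`. -/
theorem aInftyChar_log_one_div :
    (∀ ε : ℝ, 0 ≤ ε → ε < 1 →
      MemAInfty 0 1 (fun t => Real.exp (ε * Real.log (1 / t))) ∧
      aInftyChar 0 1 (fun t => Real.exp (ε * Real.log (1 / t))) =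
        Real.exp (-ε) / (1 - ε)) ∧
    (∀ ε : ℝ, 0 ≤ ε →
      MemAInfty 0 1 (fun t => Real.exp (-(ε * Real.log (1 / t)))) ∧
      aInftyChar 0 1 (fun t => Real.exp (-(ε * Real.log (1 / t)))) =
        Real.exp ε / (1 + ε)) ∧
    epsPhi 0 1 (fun t => Real.log (1 / t)) = 1 ∧
    epsPhi 0 1 (fun t => -Real.log (1 / t)) = ⊤ := by
  refine ⟨fun ε h0 h1 => part1 ε h0 h1, fun ε h0 => part2 ε h0, ?_, ?_⟩
  · -- epsPhi φ₀ = 1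
    unfold epsPhi
    apply le_antisymm
    · refine iSup₂_le fun ε hε => ?_
      have : ε < 1 := eps_lt_one hε.1 hε.2
      calc ENNReal.ofReal ε ≤ ENNReal.ofReal 1 := ENNReal.ofReal_le_ofReal this.le
        _ = 1 := ENNReal.ofReal_one
    · by_contra h
      push_neg at h
      set X := ⨆ (ε : ℝ) (_ : 0 < ε ∧ MemAInfty 0 1 fun t =>
        Real.exp (ε * Real.log (1 / t))), ENNReal.ofReal ε with hX
      have hXt : X ≠ ⊤ := ne_top_of_lt (lt_of_lt_of_le h le_top)
      have hXr : X.toReal < 1 := by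
        have := (ENNReal.toReal_lt_toReal hXt (by norm_num : (1:ℝ≥0∞) ≠ ⊤)).2 h
        simpa using this
      set ε : ℝ := (X.toReal + 1) / 2 with hεdef
      have hε0 : 0 < ε := by
        have := ENNReal.toReal_nonneg (a := X)
        rw [hεdef]; linarith
      have hε1 : ε < 1 := by rw [hεdef]; linarith
      have hmem := (part1 ε hε0.le hε1).1
      have hle : ENNReal.ofReal ε ≤ X :=
        le_iSup₂ (f := fun (ε : ℝ) (_ : 0 < ε ∧ MemAInfty 0 1 fun t =>
          Real.exp (ε * Real.log (1 / t))) => ENNReal.ofReal ε) ε ⟨hε0, hmem⟩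
      have hlt : X < ENNReal.ofReal ε := by
        calc X = ENNReal.ofReal X.toReal := (ENNReal.ofReal_toReal hXt).symm
          _ < ENNReal.ofReal ε := by
              rw [ENNReal.ofReal_lt_ofReal_iff hε0]
              rw [hεdef]
              linarith [ENNReal.toReal_nonneg (a := X)]
      exact absurd (lt_of_lt_of_le hlt hle) (lt_irrefl X)
  · -- epsPhi (-φ₀) = ⊤
    unfold epsPhi
    by_contra h
    set X := ⨆ (ε : ℝ) (_ : 0 < ε ∧ MemAInfty 0 1 fun t =>
      Real.exp (ε * -Real.log (1 / t))), ENNReal.ofReal ε with hX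
    have hXt : X ≠ ⊤ := h
    set ε : ℝ := X.toReal + 1 with hεdef
    have hε0 : 0 < ε := by
      have := ENNReal.toReal_nonneg (a := X)
      rw [hεdef]; linarith
    have hmem0 := (part2 ε (by linarith)).1
    have hfun : (fun t => Real.exp (-(ε * Real.log (1 / t)))) =
        fun t => Real.exp (ε * -Real.log (1 / t)) := by
      funext t; rw [mul_neg]
    rw [hfun] at hmem0
    have hle : ENNReal.ofReal ε ≤ X :=
      le_iSup₂ (f := fun (ε : ℝ) (_ : 0 < ε ∧ MemAInfty 0 1 fun t =>
        Real.exp (ε * -Real.log (1 / t))) => ENNReal.ofReal ε) ε ⟨hε0, hmem0⟩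
    have hlt : X < ENNReal.ofReal ε := by
      calc X = ENNReal.ofReal X.toReal := (ENNReal.ofReal_toReal hXt).symm
        _ < ENNReal.ofReal ε := by
            rw [ENNReal.ofReal_lt_ofReal_iff hε0, hεdef]
            linarith
    exact absurd (lt_of_lt_of_le hlt hle) (lt_irrefl X)
end

section
/- Let φ be such that e^φ ∈ A∞ (on ℝⁿ or on a cube), and for real numbers c < d define the truncation φ_{c,d} = c on {φ ≤ c}, φ_{c,d} = φ on {c < φ < d}, and φ_{c,d} = d on {φ ≥ d}. Then for every cube J, (1/|J|)∫_J e^{φ_{c,d} − (φ_{c,d})_J} ≤ (1/|J|)∫_J e^{φ − φ_J}, and consequently [e^{φ_{c,d}}]_{A∞} ≤ [e^{φ}]_{A∞}. -/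
open MeasureTheory Real Set Filter

/-- The average of `φ` over the axis-parallel cube with corner `c` and side `h`
in `ℝⁿ` (the cube has volume `hⁿ`). -/
noncomputable def cubeAvg (n : ℕ) (φ : (Fin n → ℝ) → ℝ) (c : Fin n → ℝ) (h : ℝ) : ℝ :=
  (∫ t in Set.Icc c (fun i => c i + h), φ t) / h ^ n

/-- The `A∞` characteristic of `w` over all cubes in `ℝⁿ`:
`sup_J (w_J)·e^{−(log w)_J}`. -/
noncomputable def aInftyCharRn (n : ℕ) (w : (Fin n → ℝ) → ℝ) : ℝ :=
  sSup {r : ℝ | ∃ (c : Fin n → ℝ) (h : ℝ), 0 < h ∧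
    r = cubeAvg n w c h *
      Real.exp (-(cubeAvg n (fun t => Real.log (w t)) c h))}

/-- `w ∈ A∞(ℝⁿ)`. -/
def MemAInftyRn (n : ℕ) (w : (Fin n → ℝ) → ℝ) : Prop :=
  (∀ᵐ t ∂(volume : Measure (Fin n → ℝ)), 0 < w t) ∧
  (∀ (c : Fin n → ℝ) (h : ℝ), 0 < h →
    IntegrableOn w (Set.Icc c fun i => c i + h) volume ∧
    IntegrableOn (fun t => Real.log (w t)) (Set.Icc c fun i => c i + h) volume) ∧
  BddAbove {r : ℝ | ∃ (c : Fin n → ℝ) (h : ℝ), 0 < h ∧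
    r = cubeAvg n w c h *
      Real.exp (-(cubeAvg n (fun t => Real.log (w t)) c h))}

section Aux

variable {α : Type*} [MeasurableSpace α] {μ : Measure α}

/-- Chebyshev's correlation inequality for integrals. -/
lemma chebyshev_integral [IsProbabilityMeasure μ] {f g : α → ℝ}
    (hf : Integrable f μ) (hg : Integrable g μ)
    (hfg : Integrable (fun x => f x * g x) μ)
    (hmono : ∀ x y, 0 ≤ (f x - f y) * (g x - g y)) :
    (∫ x, f x ∂μ) * ∫ x, g x ∂μ ≤ ∫ x, f x * g x ∂μ := by
  have A : Integrable (fun p : α × α => f p.1 * g p.1) (μ.prod μ) := by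
    simpa using hfg.mul_prod (integrable_const (1 : ℝ))
  have B : Integrable (fun p : α × α => f p.2 * g p.2) (μ.prod μ) := by
    simpa using (integrable_const (1 : ℝ)).mul_prod hfg
  have C : Integrable (fun p : α × α => f p.1 * g p.2) (μ.prod μ) := hf.mul_prod hg
  have D : Integrable (fun p : α × α => g p.1 * f p.2) (μ.prod μ) := hg.mul_prod hf
  have AB : Integrable (fun p : α × α => f p.1 * g p.1 + f p.2 * g p.2) (μ.prod μ) := A.add B
  have CD : Integrable (fun p : α × α => f p.1 * g p.2 + g p.1 * f p.2) (μ.prod μ) := C.add D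
  have key : 0 ≤ ∫ p : α × α, (f p.1 - f p.2) * (g p.1 - g p.2) ∂(μ.prod μ) :=
    integral_nonneg fun p => hmono p.1 p.2
  have expand : (fun p : α × α => (f p.1 - f p.2) * (g p.1 - g p.2))
      = fun p : α × α => (f p.1 * g p.1 + f p.2 * g p.2)
          - (f p.1 * g p.2 + g p.1 * f p.2) := by
    funext p; ring
  rw [expand, integral_sub AB CD, integral_add A B, integral_add C D] at key
  have v1 : ∫ p : α × α, f p.1 * g p.1 ∂(μ.prod μ) = ∫ x, f x * g x ∂μ := by
    simpa using integral_prod_mul (μ := μ) (ν := μ) (fun x => f x * g x) (fun _ => (1 : ℝ))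
  have v2 : ∫ p : α × α, f p.2 * g p.2 ∂(μ.prod μ) = ∫ x, f x * g x ∂μ := by
    simpa using integral_prod_mul (μ := μ) (ν := μ) (fun _ => (1 : ℝ)) (fun x => f x * g x)
  have v3 : ∫ p : α × α, f p.1 * g p.2 ∂(μ.prod μ) = (∫ x, f x ∂μ) * ∫ x, g x ∂μ :=
    integral_prod_mul f g
  have v4 : ∫ p : α × α, g p.1 * f p.2 ∂(μ.prod μ) = (∫ x, g x ∂μ) * ∫ x, f x ∂μ :=
    integral_prod_mul g f
  rw [v1, v2, v3, v4] at key
  nlinarith [key]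

/-- Jensen's inequality for `exp`. -/
lemma exp_integral_le' [IsProbabilityMeasure μ] {f : α → ℝ} (hf : Integrable f μ)
    (hef : Integrable (fun x => Real.exp (f x)) μ) :
    Real.exp (∫ x, f x ∂μ) ≤ ∫ x, Real.exp (f x) ∂μ :=
  convexOn_exp.map_integral_le continuous_exp.continuousOn isClosed_univ
    (Eventually.of_forall fun _ => mem_univ _) hf hef

/-- One truncation step. -/
lemma step_ineq [IsProbabilityMeasure μ] {u v : α → ℝ}
    (hu : Integrable u μ) (hv : Integrable v μ)
    (heu : Integrable (fun x => Real.exp (u x)) μ)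
    (hev : Integrable (fun x => Real.exp (v x)) μ)
    (hevu : Integrable (fun x => Real.exp (u x - v x)) μ)
    (hmono : ∀ x y, 0 ≤ (Real.exp (v x) - Real.exp (v y)) *
      (Real.exp (u x - v x) - Real.exp (u y - v y))) :
    (∫ x, Real.exp (v x) ∂μ) * Real.exp (-∫ x, v x ∂μ) ≤
      (∫ x, Real.exp (u x) ∂μ) * Real.exp (-∫ x, u x ∂μ) := by
  have heq : ∀ x, Real.exp (v x) * Real.exp (u x - v x) = Real.exp (u x) := by
    intro x; rw [← Real.exp_add]; ring_nf
  have hfg : Integrable (fun x => Real.exp (v x) * Real.exp (u x - v x)) μ :=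
    heu.congr (Eventually.of_forall fun x => (heq x).symm)
  have cheb : (∫ x, Real.exp (v x) ∂μ) * (∫ x, Real.exp (u x - v x) ∂μ)
      ≤ ∫ x, Real.exp (u x) ∂μ := by
    have := chebyshev_integral hev hevu hfg hmono
    rwa [integral_congr_ae (Eventually.of_forall heq)] at this
  have huv : Integrable (fun x => u x - v x) μ := hu.sub hv
  have jensen : Real.exp ((∫ x, u x ∂μ) - ∫ x, v x ∂μ) ≤ ∫ x, Real.exp (u x - v x) ∂μ := by
    have := exp_integral_le' huv hevu
    rwa [integral_sub hu hv] at this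
  have hA : (0:ℝ) ≤ ∫ x, Real.exp (v x) ∂μ := integral_nonneg fun x => (Real.exp_pos _).le
  have e1 : Real.exp ((∫ x, u x ∂μ) - ∫ x, v x ∂μ) * Real.exp (-∫ x, u x ∂μ)
      = Real.exp (-∫ x, v x ∂μ) := by
    rw [← Real.exp_add]; congr 1; ring
  calc (∫ x, Real.exp (v x) ∂μ) * Real.exp (-∫ x, v x ∂μ)
      = ((∫ x, Real.exp (v x) ∂μ) * Real.exp ((∫ x, u x ∂μ) - ∫ x, v x ∂μ))
          * Real.exp (-∫ x, u x ∂μ) := by rw [mul_assoc, e1]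
    _ ≤ ((∫ x, Real.exp (v x) ∂μ) * (∫ x, Real.exp (u x - v x) ∂μ))
          * Real.exp (-∫ x, u x ∂μ) :=
        mul_le_mul_of_nonneg_right (mul_le_mul_of_nonneg_left jensen hA)
          (Real.exp_pos _).le
    _ ≤ (∫ x, Real.exp (u x) ∂μ) * Real.exp (-∫ x, u x ∂μ) :=
        mul_le_mul_of_nonneg_right cheb (Real.exp_pos _).le

lemma monovary_aux {E₁ E₂ : ℝ → ℝ} (h₁ : Monotone E₁) (h₂ : Monotone E₂)
    (φ : α → ℝ) (x y : α) : 0 ≤ (E₁ (φ x) - E₁ (φ y)) * (E₂ (φ x) - E₂ (φ y)) := by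
  rcases le_total (φ x) (φ y) with h | h
  · nlinarith [h₁ h, h₂ h]
  · nlinarith [h₁ h, h₂ h]

lemma mono_sub_min (d : ℝ) : Monotone fun t : ℝ => t - min t d := by
  intro a b hab
  simp only
  rcases le_total a d with h | h <;> rcases le_total b d with h' | h'
  · rw [min_eq_left h, min_eq_left h']; simp
  · rw [min_eq_left h, min_eq_right h']; linarith
  · rw [min_eq_right h, min_eq_left h']; linarith
  · rw [min_eq_right h, min_eq_right h']; linarith

lemma integrable_of_bdd [IsFiniteMeasure μ] {f : α → ℝ} (hm : AEStronglyMeasurable f μ)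
    (C : ℝ) (hC : ∀ x, ‖f x‖ ≤ C) : Integrable f μ :=
  (integrable_const C).mono' hm (Eventually.of_forall hC)

/-- The main inequality on a probability space. -/
lemma trunc_main [IsProbabilityMeasure μ] {φ : α → ℝ} {c d : ℝ} (hcd : c < d)
    (hφ : Integrable φ μ) (heφ : Integrable (fun x => Real.exp (φ x)) μ) :
    (∫ x, Real.exp (max c (min (φ x) d)) ∂μ) *
        Real.exp (-∫ x, max c (min (φ x) d) ∂μ) ≤
      (∫ x, Real.exp (φ x) ∂μ) * Real.exp (-∫ x, φ x ∂μ) := by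
  have haem : AEMeasurable φ μ := hφ.aemeasurable
  have aesm : ∀ {E : ℝ → ℝ}, Continuous E → AEStronglyMeasurable (fun x => E (φ x)) μ :=
    fun hE => (hE.measurable.comp_aemeasurable haem).aestronglyMeasurable
  set g : α → ℝ := fun x => min (φ x) d with hg_def
  -- integrability facts
  have hGint : Integrable (fun x => |φ x| + |d|) μ := hφ.abs.add (integrable_const _)
  have hg : Integrable g μ := by
    refine hGint.mono' (aesm (continuous_id.min continuous_const))
      (Eventually.of_forall fun x => ?_)
    rw [Real.norm_eq_abs]
    rcases le_total (φ x) d with h | h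
    · rw [hg_def]; simp only; rw [min_eq_left h]
      have := abs_nonneg d; linarith [le_abs_self (φ x), neg_abs_le (φ x), le_refl (|φ x|)]
    · rw [hg_def]; simp only; rw [min_eq_right h]
      have := abs_nonneg (φ x); linarith
  have heg : Integrable (fun x => Real.exp (g x)) μ := by
    refine integrable_of_bdd (aesm (continuous_exp.comp
      (continuous_id.min continuous_const))) (Real.exp d) fun x => ?_
    rw [Real.norm_eq_abs, abs_of_pos (Real.exp_pos _)]
    exact Real.exp_le_exp.2 (min_le_right _ _)
  have hG2int : Integrable (fun x => 1 + Real.exp (-d) * Real.exp (φ x)) μ :=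
    (integrable_const (1:ℝ)).add (heφ.const_mul (Real.exp (-d)))
  have heφg : Integrable (fun x => Real.exp (φ x - g x)) μ := by
    refine hG2int.mono' (aesm (continuous_exp.comp
      (continuous_id.sub (continuous_id.min continuous_const))))
      (Eventually.of_forall fun x => ?_)
    rw [Real.norm_eq_abs, abs_of_pos (Real.exp_pos _)]
    rcases le_total (φ x) d with h | h
    · have hx : φ x - g x = 0 := by rw [hg_def]; simp only; rw [min_eq_left h]; ring
      rw [hx, Real.exp_zero]
      nlinarith [Real.exp_pos (-d), Real.exp_pos (φ x)]
    · have hx : φ x - g x = -d + φ x := by rw [hg_def]; simp only; rw [min_eq_right h]; ring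
      rw [hx, Real.exp_add]
      norm_num
  set ψ : α → ℝ := fun x => max c (g x) with hψ_def
  have hψbd : ∀ x, c ≤ ψ x ∧ ψ x ≤ d := fun x =>
    ⟨le_max_left _ _, max_le hcd.le (min_le_right _ _)⟩
  have hψ : Integrable ψ μ := by
    refine integrable_of_bdd (aesm (continuous_const.max
      (continuous_id.min continuous_const))) (|c| + |d|) fun x => ?_
    rw [Real.norm_eq_abs]
    rcases hψbd x with ⟨h1, h2⟩
    rw [abs_le]
    constructor
    · linarith [neg_abs_le c, abs_nonneg d]
    · linarith [le_abs_self d, abs_nonneg c]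
  have heψ : Integrable (fun x => Real.exp (ψ x)) μ := by
    refine integrable_of_bdd (aesm (continuous_exp.comp (continuous_const.max
      (continuous_id.min continuous_const)))) (Real.exp d) fun x => ?_
    rw [Real.norm_eq_abs, abs_of_pos (Real.exp_pos _)]
    exact Real.exp_le_exp.2 (hψbd x).2
  have hegψ : Integrable (fun x => Real.exp (g x - ψ x)) μ := by
    refine integrable_of_bdd (aesm (continuous_exp.comp
      ((continuous_id.min continuous_const).sub (continuous_const.max
        (continuous_id.min continuous_const))))) 1 fun x => ?_
    rw [Real.norm_eq_abs, abs_of_pos (Real.exp_pos _)]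
    have : g x ≤ ψ x := le_max_right _ _
    calc Real.exp (g x - ψ x) ≤ Real.exp 0 := Real.exp_le_exp.2 (by linarith)
    _ = 1 := Real.exp_zero
  -- step 1 : φ → g
  have step1 : (∫ x, Real.exp (g x) ∂μ) * Real.exp (-∫ x, g x ∂μ) ≤
      (∫ x, Real.exp (φ x) ∂μ) * Real.exp (-∫ x, φ x ∂μ) := by
    refine step_ineq hφ hg heφ heg heφg fun x y => ?_
    exact monovary_aux
      (Real.exp_monotone.comp (monotone_id.min monotone_const))
      (Real.exp_monotone.comp (mono_sub_min d)) φ x y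
  -- step 2 : g → ψ
  have step2 : (∫ x, Real.exp (ψ x) ∂μ) * Real.exp (-∫ x, ψ x ∂μ) ≤
      (∫ x, Real.exp (g x) ∂μ) * Real.exp (-∫ x, g x ∂μ) := by
    refine step_ineq hg hψ heg heψ hegψ fun x y => ?_
    have hm2 : Monotone fun s : ℝ => s - max c s := by
      intro a b hab
      simp only
      rcases le_total c a with h | h <;> rcases le_total c b with h' | h'
      · rw [max_eq_right h, max_eq_right h']; simp
      · rw [max_eq_right h, max_eq_left h']; linarith
      · rw [max_eq_left h, max_eq_right h']; linarith
      · rw [max_eq_left h, max_eq_left h']; linarith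
    exact monovary_aux
      (Real.exp_monotone.comp (monotone_const.max (monotone_id.min monotone_const)))
      (Real.exp_monotone.comp (hm2.comp (monotone_id.min monotone_const))) φ x y
  exact le_trans step2 step1

end Aux

/-- Truncation does not increase the `A∞` characteristic: if `e^φ ∈ A∞(ℝⁿ)` and
`c < d`, the truncation `φ_{c,d} = max(c, min(φ, d))` satisfies, for every cube
`J`, `(1/|J|)∫_J e^{φ_{c,d} − (φ_{c,d})_J} ≤ (1/|J|)∫_J e^{φ − φ_J}`, and
consequently `[e^{φ_{c,d}}]_{A∞} ≤ [e^φ]_{A∞}`. -/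
theorem truncation_aInftyChar_le (n : ℕ) (φ : (Fin n → ℝ) → ℝ) (c d : ℝ)
    (hcd : c < d) (hmem : MemAInftyRn n fun t => Real.exp (φ t)) :
    (∀ (q : Fin n → ℝ) (h : ℝ), 0 < h →
      cubeAvg n
        (fun t => Real.exp (max c (min (φ t) d) -
          cubeAvg n (fun s => max c (min (φ s) d)) q h)) q h ≤
      cubeAvg n (fun t => Real.exp (φ t - cubeAvg n φ q h)) q h) ∧
    aInftyCharRn n (fun t => Real.exp (max c (min (φ t) d))) ≤
      aInftyCharRn n (fun t => Real.exp (φ t)) := by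
  obtain ⟨hpos, hint, hbdd⟩ := hmem
  -- the key inequality on each cube
  have cube_key : ∀ (q : Fin n → ℝ) (h : ℝ), 0 < h →
      cubeAvg n (fun t => Real.exp (max c (min (φ t) d))) q h *
        Real.exp (-(cubeAvg n (fun s => max c (min (φ s) d)) q h)) ≤
      cubeAvg n (fun t => Real.exp (φ t)) q h * Real.exp (-(cubeAvg n φ q h)) := by
    intro q h hh
    have hpow : (0:ℝ) < h ^ n := by positivity
    have hvol : volume (Set.Icc q (fun i => q i + h)) = ENNReal.ofReal (h ^ n) := by
      rw [Real.volume_Icc_pi, ENNReal.ofReal_pow hh.le]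
      simp [add_sub_cancel_left]
    have hne : ENNReal.ofReal (h ^ n) ≠ 0 := ne_of_gt (ENNReal.ofReal_pos.2 hpow)
    have htop : ENNReal.ofReal (h ^ n) ≠ ⊤ := ENNReal.ofReal_ne_top
    set μ : Measure (Fin n → ℝ) :=
      (ENNReal.ofReal (h ^ n))⁻¹ • volume.restrict (Set.Icc q (fun i => q i + h)) with hμ
    haveI : IsProbabilityMeasure μ := by
      constructor
      rw [hμ, Measure.smul_apply, Measure.restrict_apply_univ, hvol, smul_eq_mul,
        ENNReal.inv_mul_cancel hne htop]
    have avg_eq : ∀ w : (Fin n → ℝ) → ℝ, cubeAvg n w q h = ∫ x, w x ∂μ := by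
      intro w
      rw [hμ, integral_smul_measure, ENNReal.toReal_inv, ENNReal.toReal_ofReal hpow.le]
      simp [cubeAvg, div_eq_inv_mul]
    obtain ⟨h1, h2⟩ := hint q h hh
    have h2' : IntegrableOn φ (Set.Icc q (fun i => q i + h)) volume := by
      simpa [Real.log_exp] using h2
    have hinvtop : (ENNReal.ofReal (h ^ n))⁻¹ ≠ ⊤ := by
      simp [ENNReal.inv_ne_top, hne]
    have hφι : Integrable φ μ := h2'.smul_measure hinvtop
    have heφι : Integrable (fun t => Real.exp (φ t)) μ := h1.smul_measure hinvtop
    rw [avg_eq, avg_eq, avg_eq, avg_eq]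
    exact trunc_main hcd hφι heφι
  constructor
  · intro q h hh
    have shift : ∀ (w : (Fin n → ℝ) → ℝ) (a : ℝ),
        cubeAvg n (fun t => Real.exp (w t - a)) q h
          = cubeAvg n (fun t => Real.exp (w t)) q h * Real.exp (-a) := by
      intro w a
      unfold cubeAvg
      simp_rw [Real.exp_sub]
      rw [integral_div, Real.exp_neg]
      ring
    rw [shift, shift]
    exact cube_key q h hh
  · have hlog1 : (fun t => Real.log (Real.exp (max c (min (φ t) d))))
        = fun t => max c (min (φ t) d) := funext fun t => Real.log_exp _
    have hlog2 : (fun t => Real.log (Real.exp (φ t))) = φ := funext fun t => Real.log_exp _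
    have hmem0 : ∀ (q : Fin n → ℝ) (h : ℝ), 0 < h →
        cubeAvg n (fun t => Real.exp (φ t)) q h * Real.exp (-(cubeAvg n φ q h)) ∈
          {r : ℝ | ∃ (q' : Fin n → ℝ) (h' : ℝ), 0 < h' ∧
            r = cubeAvg n (fun t => Real.exp (φ t)) q' h' *
              Real.exp (-(cubeAvg n (fun t => Real.log (Real.exp (φ t))) q' h'))} := by
      intro q h hh
      exact ⟨q, h, hh, by rw [hlog2]⟩
    have hsup_nonneg : 0 ≤ aInftyCharRn n (fun t => Real.exp (φ t)) := by
      have h0 : (0:ℝ) ≤ cubeAvg n (fun t => Real.exp (φ t)) 0 1 *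
          Real.exp (-(cubeAvg n φ 0 1)) := by
        refine mul_nonneg ?_ (Real.exp_pos _).le
        unfold cubeAvg
        refine div_nonneg (integral_nonneg fun t => (Real.exp_pos _).le) (by positivity)
      exact h0.trans (le_csSup hbdd (hmem0 0 1 one_pos))
    refine Real.sSup_le ?_ hsup_nonneg
    rintro r ⟨q, h, hh, rfl⟩
    rw [hlog1]
    exact (cube_key q h hh).trans (le_csSup hbdd (hmem0 q h hh))
end
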